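/- Let A ∈ ℝ^{m×n}, let T ∈ ℝ^{n×n} be symmetric (in the paper T = −Q − Θ^{-1} with Q positive semidefinite and Θ^{-1} diagonal positive definite), and let M = [[T, Aᵀ],[A, 0]]. Suppose λ ≠ 0 is an eigenvalue of M that is not an eigenvalue of T, let x = (x₁, x₂) with x₁ ∈ ℝⁿ, x₂ ∈ ℝᵐ be a unit eigenvector of M for λ, and set ζ = min{ |λ − ν| : ν an eigenvalue of T }. Then ‖x₁‖ ≤ ‖A‖ / √(ζ² + ‖A‖²) and ‖x₂‖ ≤ ‖A‖ / √(λ² + ‖A‖²). -/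

import Mathlib

open Matrix

/-- Euclidean norm of a real vector. -/
noncomputable def euclEnorm {ι : Type*} [Fintype ι] (x : ι → ℝ) : ℝ :=
  Real.sqrt (∑ i, (x i) ^ 2)

/-- Spectral norm (largest singular value) of a real matrix. -/
noncomputable def specNorm {m n : ℕ} (A : Matrix (Fin m) (Fin n) ℝ) : ℝ :=
  Real.sqrt (⨆ i, (Matrix.isHermitian_mul_conjTranspose_self A).eigenvalues i)

namespace Stmt17Aux

/-- eigenvector of a Hermitian matrix, as a plain function -/
noncomputable def evB {n : ℕ} {B : Matrix (Fin n) (Fin n) ℝ} (hB : B.IsHermitian)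
    (i : Fin n) : Fin n → ℝ :=
  ⇑(hB.eigenvectorBasis i)

lemma coeff_eq {n : ℕ} {B : Matrix (Fin n) (Fin n) ℝ} (hB : B.IsHermitian)
    (v : Fin n → ℝ) (i : Fin n) :
    hB.eigenvectorBasis.repr ((WithLp.equiv 2 _).symm v) i = evB hB i ⬝ᵥ v := by
  rw [OrthonormalBasis.repr_apply_apply]
  simp [PiLp.inner_apply, dotProduct, evB, mul_comm]

/-- Parseval-type expansion of the dot product in the eigenbasis. -/
lemma dot_eq_sum {n : ℕ} {B : Matrix (Fin n) (Fin n) ℝ} (hB : B.IsHermitian)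
    (v w : Fin n → ℝ) :
    v ⬝ᵥ w = ∑ i, (evB hB i ⬝ᵥ v) * (evB hB i ⬝ᵥ w) := by
  set V : EuclideanSpace ℝ (Fin n) := (WithLp.equiv 2 _).symm v with hV
  set W : EuclideanSpace ℝ (Fin n) := (WithLp.equiv 2 _).symm w with hW
  have h1 : v ⬝ᵥ w = (inner ℝ V W : ℝ) := by
    simp [PiLp.inner_apply, dotProduct, hV, hW, mul_comm]
  have h2 : (inner ℝ V W : ℝ) = inner ℝ (hB.eigenvectorBasis.repr V) (hB.eigenvectorBasis.repr W) :=
    (hB.eigenvectorBasis.repr.inner_map_map V W).symm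
  rw [h1, h2, PiLp.inner_apply]
  refine Finset.sum_congr rfl fun i _ => ?_
  rw [hV, hW, coeff_eq hB v i, coeff_eq hB w i]; simp [mul_comm]

lemma sum_sq_eq {n : ℕ} {B : Matrix (Fin n) (Fin n) ℝ} (hB : B.IsHermitian)
    (v : Fin n → ℝ) :
    ∑ j, v j ^ 2 = ∑ i, (evB hB i ⬝ᵥ v) ^ 2 := by
  have := dot_eq_sum hB v v
  simpa [dotProduct, pow_two] using this

lemma dot_mulVec_eigen {n : ℕ} {B : Matrix (Fin n) (Fin n) ℝ} (hB : B.IsHermitian)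
    (v : Fin n → ℝ) (i : Fin n) :
    evB hB i ⬝ᵥ (B *ᵥ v) = hB.eigenvalues i * (evB hB i ⬝ᵥ v) := by
  rw [dotProduct_mulVec, ← Matrix.mulVec_transpose]
  have hTr : Bᵀ = B := by
    rw [← Matrix.conjTranspose_eq_transpose_of_trivial]; exact hB.eq
  rw [hTr]
  have := hB.mulVec_eigenvectorBasis i
  rw [show B *ᵥ evB hB i = hB.eigenvalues i • evB hB i from this]
  simp [smul_dotProduct, smul_eq_mul]

lemma euclEnorm_nonneg {ι : Type*} [Fintype ι] (x : ι → ℝ) : 0 ≤ euclEnorm x :=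
  Real.sqrt_nonneg _

lemma euclEnorm_sq {ι : Type*} [Fintype ι] (x : ι → ℝ) : euclEnorm x ^ 2 = ∑ i, (x i) ^ 2 :=
  Real.sq_sqrt (Finset.sum_nonneg fun i _ => sq_nonneg _)

lemma euclEnorm_smul {ι : Type*} [Fintype ι] (a : ℝ) (x : ι → ℝ) :
    euclEnorm (a • x) = |a| * euclEnorm x := by
  unfold euclEnorm
  rw [← Real.sqrt_sq_eq_abs, ← Real.sqrt_mul (sq_nonneg a), Finset.mul_sum]
  congr 1
  exact Finset.sum_congr rfl fun i _ => by simp [mul_pow]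

lemma euclEnorm_neg {ι : Type*} [Fintype ι] (x : ι → ℝ) : euclEnorm (-x) = euclEnorm x := by
  simp [euclEnorm]

lemma specNorm_nonneg {m n : ℕ} (A : Matrix (Fin m) (Fin n) ℝ) : 0 ≤ specNorm A :=
  Real.sqrt_nonneg _

lemma iSup_eig_nonneg {m n : ℕ} (A : Matrix (Fin m) (Fin n) ℝ) :
    0 ≤ ⨆ i, (Matrix.isHermitian_mul_conjTranspose_self A).eigenvalues i := by
  cases isEmpty_or_nonempty (Fin m) with
  | inl h => simp [Real.iSup_of_isEmpty]
  | inr h =>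
    obtain ⟨i⟩ := h
    refine le_ciSup_of_le (Set.Finite.bddAbove (Set.finite_range _)) i ?_
    exact (Matrix.posSemidef_self_mul_conjTranspose A).eigenvalues_nonneg i

lemma eig_le_sq_specNorm {m n : ℕ} (A : Matrix (Fin m) (Fin n) ℝ) (i : Fin m) :
    (Matrix.isHermitian_mul_conjTranspose_self A).eigenvalues i ≤ specNorm A ^ 2 := by
  rw [specNorm, Real.sq_sqrt (iSup_eig_nonneg A)]
  exact le_ciSup (Set.Finite.bddAbove (Set.finite_range _)) i

/-- The key quadratic bound: `‖Aᵀ w‖² ≤ s² ‖w‖²`. -/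
lemma sq_norm_transpose_mulVec_le {m n : ℕ} (A : Matrix (Fin m) (Fin n) ℝ)
    (w : Fin m → ℝ) :
    ∑ j, (Aᵀ *ᵥ w) j ^ 2 ≤ specNorm A ^ 2 * ∑ i, w i ^ 2 := by
  have hB := Matrix.isHermitian_mul_conjTranspose_self A
  have h1 : ∑ j, (Aᵀ *ᵥ w) j ^ 2 = w ⬝ᵥ ((A * Aᴴ) *ᵥ w) := by
    have h : (Aᵀ *ᵥ w) ⬝ᵥ (Aᵀ *ᵥ w) = w ⬝ᵥ ((A * Aᴴ) *ᵥ w) := by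
      rw [Matrix.conjTranspose_eq_transpose_of_trivial, ← Matrix.mulVec_mulVec]
      nth_rewrite 1 [Matrix.mulVec_transpose]
      rw [← Matrix.dotProduct_mulVec]
    rw [← h]
    simp [dotProduct, pow_two]
  rw [h1, dot_eq_sum hB w ((A * Aᴴ) *ᵥ w), sum_sq_eq hB w, Finset.mul_sum]
  refine Finset.sum_le_sum fun i _ => ?_
  rw [dot_mulVec_eigen hB w i]
  have := eig_le_sq_specNorm A i
  nlinarith [sq_nonneg (evB hB i ⬝ᵥ w)]

lemma norm_transpose_mulVec_le {m n : ℕ} (A : Matrix (Fin m) (Fin n) ℝ)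
    (w : Fin m → ℝ) : euclEnorm (Aᵀ *ᵥ w) ≤ specNorm A * euclEnorm w := by
  have h := sq_norm_transpose_mulVec_le A w
  unfold euclEnorm
  calc Real.sqrt (∑ j, (Aᵀ *ᵥ w) j ^ 2) ≤ Real.sqrt (specNorm A ^ 2 * ∑ i, w i ^ 2) :=
        Real.sqrt_le_sqrt h
    _ = specNorm A * Real.sqrt (∑ i, w i ^ 2) := by
        rw [Real.sqrt_mul (sq_nonneg _), Real.sqrt_sq (specNorm_nonneg A)]

lemma cauchy_dot {ι : Type*} [Fintype ι] (v w : ι → ℝ) :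
    v ⬝ᵥ w ≤ euclEnorm v * euclEnorm w := by
  have h := Finset.sum_mul_sq_le_sq_mul_sq Finset.univ v w
  calc v ⬝ᵥ w ≤ |v ⬝ᵥ w| := le_abs_self _
    _ = Real.sqrt ((v ⬝ᵥ w) ^ 2) := (Real.sqrt_sq_eq_abs _).symm
    _ ≤ Real.sqrt ((∑ i, v i ^ 2) * (∑ i, w i ^ 2)) := Real.sqrt_le_sqrt h
    _ = euclEnorm v * euclEnorm w := by
        rw [Real.sqrt_mul (Finset.sum_nonneg fun i _ => sq_nonneg _)]; rfl

lemma norm_mulVec_le {m n : ℕ} (A : Matrix (Fin m) (Fin n) ℝ)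
    (v : Fin n → ℝ) : euclEnorm (A *ᵥ v) ≤ specNorm A * euclEnorm v := by
  set u := A *ᵥ v with hu
  set t := euclEnorm u with ht
  have htn : 0 ≤ t := euclEnorm_nonneg u
  have hkey : t ^ 2 ≤ specNorm A * t * euclEnorm v := by
    have h1 : t ^ 2 = u ⬝ᵥ (A *ᵥ v) := by rw [euclEnorm_sq, ← hu]; simp [dotProduct, pow_two]
    have h2 : u ⬝ᵥ (A *ᵥ v) = (Aᵀ *ᵥ u) ⬝ᵥ v := by
      rw [Matrix.dotProduct_mulVec, Matrix.mulVec_transpose]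
    have h3 : (Aᵀ *ᵥ u) ⬝ᵥ v ≤ euclEnorm (Aᵀ *ᵥ u) * euclEnorm v := cauchy_dot _ _
    have h4 : euclEnorm (Aᵀ *ᵥ u) ≤ specNorm A * t := norm_transpose_mulVec_le A u
    calc t ^ 2 = (Aᵀ *ᵥ u) ⬝ᵥ v := by rw [h1, h2]
      _ ≤ euclEnorm (Aᵀ *ᵥ u) * euclEnorm v := h3
      _ ≤ specNorm A * t * euclEnorm v :=
          mul_le_mul_of_nonneg_right h4 (euclEnorm_nonneg v)
  rcases htn.lt_or_eq with hpos | hzero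
  · nlinarith
  · rw [← hzero]
    exact mul_nonneg (specNorm_nonneg A) (euclEnorm_nonneg v)

lemma zeta_bound {n : ℕ} {T : Matrix (Fin n) (Fin n) ℝ} (hT : T.IsHermitian)
    {lam ζ : ℝ} (hz0 : 0 ≤ ζ) (hzle : ∀ i, ζ ≤ |lam - hT.eigenvalues i|)
    (y : Fin n → ℝ) :
    ζ * euclEnorm y ≤ euclEnorm (T *ᵥ y - lam • y) := by
  have hcoef : ∀ i, evB hT i ⬝ᵥ (T *ᵥ y - lam • y)
      = (hT.eigenvalues i - lam) * (evB hT i ⬝ᵥ y) := by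
    intro i
    rw [dotProduct_sub, dot_mulVec_eigen hT y i]
    have : evB hT i ⬝ᵥ (lam • y) = lam * (evB hT i ⬝ᵥ y) := by
      simp [dotProduct, Finset.mul_sum]; ring_nf
      exact Finset.sum_congr rfl fun i _ => by ring
    rw [this]; ring
  have hsq : ζ ^ 2 * ∑ j, y j ^ 2 ≤ ∑ j, (T *ᵥ y - lam • y) j ^ 2 := by
    rw [sum_sq_eq hT y, sum_sq_eq hT (T *ᵥ y - lam • y), Finset.mul_sum]
    refine Finset.sum_le_sum fun i _ => ?_
    rw [hcoef i, mul_pow]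
    have h1 : ζ ^ 2 ≤ (hT.eigenvalues i - lam) ^ 2 := by
      have := hzle i
      have habs : |lam - hT.eigenvalues i| ^ 2 = (hT.eigenvalues i - lam) ^ 2 := by
        rw [sq_abs]; ring
      nlinarith [abs_nonneg (lam - hT.eigenvalues i)]
    nlinarith [sq_nonneg (evB hT i ⬝ᵥ y)]
  calc ζ * euclEnorm y = Real.sqrt (ζ ^ 2 * ∑ j, y j ^ 2) := by
        rw [Real.sqrt_mul (sq_nonneg _), Real.sqrt_sq hz0]; rfl
    _ ≤ Real.sqrt (∑ j, (T *ᵥ y - lam • y) j ^ 2) := Real.sqrt_le_sqrt hsq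
    _ = euclEnorm (T *ᵥ y - lam • y) := rfl

/-- Final algebraic step. -/
lemma final_calc {a b s u : ℝ} (ha : 0 ≤ a) (hb : 0 ≤ b) (hs : 0 ≤ s) (hu : 0 < u)
    (hab : a ^ 2 + b ^ 2 = 1) (h : u * a ≤ s * b) :
    a ≤ s / Real.sqrt (u ^ 2 + s ^ 2) := by
  have hden : 0 < u ^ 2 + s ^ 2 := by positivity
  have hsq : a ^ 2 ≤ s ^ 2 / (u ^ 2 + s ^ 2) := by
    rw [le_div_iff₀ hden]
    nlinarith [mul_nonneg (hu.le) ha, mul_nonneg hs hb]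
  calc a = Real.sqrt (a ^ 2) := (Real.sqrt_sq ha).symm
    _ ≤ Real.sqrt (s ^ 2 / (u ^ 2 + s ^ 2)) := Real.sqrt_le_sqrt hsq
    _ = s / Real.sqrt (u ^ 2 + s ^ 2) := by
        rw [Real.sqrt_div (sq_nonneg s), Real.sqrt_sq hs]

end Stmt17Aux

open Stmt17Aux
theorem stmt_17 {m n : ℕ} (A : Matrix (Fin m) (Fin n) ℝ)
    (T : Matrix (Fin n) (Fin n) ℝ) (hT : T.IsHermitian)
    (M : Matrix (Fin n ⊕ Fin m) (Fin n ⊕ Fin m) ℝ)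
    (hMdef : M = Matrix.fromBlocks T Aᵀ A 0)
    (lam : ℝ) (hlam : lam ≠ 0)
    (hnotT : ¬ ∃ v : Fin n → ℝ, v ≠ 0 ∧ T.mulVec v = lam • v)
    (x : Fin n ⊕ Fin m → ℝ) (hx : x ≠ 0)
    (heig : M.mulVec x = lam • x)
    (hxnorm : euclEnorm x = 1)
    (ζ : ℝ) (hζ : ζ = ⨅ i, |lam - hT.eigenvalues i|) :
    euclEnorm (x ∘ Sum.inl) ≤ specNorm A / Real.sqrt (ζ ^ 2 + specNorm A ^ 2) ∧
    euclEnorm (x ∘ Sum.inr) ≤ specNorm A / Real.sqrt (lam ^ 2 + specNorm A ^ 2) := by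
  set x₁ : Fin n → ℝ := x ∘ Sum.inl with hx1
  set x₂ : Fin m → ℝ := x ∘ Sum.inr with hx2
  -- decompose the eigen equation
  rw [hMdef, ← Sum.elim_comp_inl_inr x, fromBlocks_mulVec] at heig
  have e1 : T *ᵥ x₁ + Aᵀ *ᵥ x₂ = lam • x₁ := by
    funext i; have := congrFun heig (Sum.inl i); simp at this; exact this
  have e2 : A *ᵥ x₁ = lam • x₂ := by
    funext j; have := congrFun heig (Sum.inr j); simp at this; exact this
  -- rule out n = 0
  rcases Nat.eq_zero_or_pos n with hn | hn
  · subst hn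
    exfalso
    apply hx
    have hA0 : A *ᵥ x₁ = 0 := by
      funext j; simp [Matrix.mulVec, dotProduct]
    rw [hA0] at e2
    have hx2z : x₂ = 0 := by
      rcases smul_eq_zero.mp e2.symm with h | h
      · exact absurd h hlam
      · exact h
    funext z
    cases z with
    | inl i => exact i.elim0
    | inr j => exact congrFun hx2z j
  haveI : Nonempty (Fin n) := ⟨⟨0, hn⟩⟩
  -- ζ facts
  have hbd : BddBelow (Set.range fun i => |lam - hT.eigenvalues i|) :=
    (Set.finite_range _).bddBelow
  have hzle : ∀ i, ζ ≤ |lam - hT.eigenvalues i| := by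
    intro i; rw [hζ]; exact ciInf_le hbd i
  have hz0 : 0 ≤ ζ := by
    rw [hζ]; exact le_ciInf fun i => abs_nonneg _
  have hzpos : 0 < ζ := by
    rcases hz0.lt_or_eq with h | h
    · exact h
    exfalso
    obtain ⟨i, hi⟩ := Finite.exists_min fun i => |lam - hT.eigenvalues i|
    have hile : |lam - hT.eigenvalues i| ≤ ζ := by
      rw [hζ]; exact le_ciInf hi
    have hieq : |lam - hT.eigenvalues i| = 0 :=
      le_antisymm (by rw [← h] at hile; exact hile) (abs_nonneg _)
    have hlameq : lam = hT.eigenvalues i := by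
      have := abs_eq_zero.mp hieq; linarith
    apply hnotT
    refine ⟨evB hT i, ?_, ?_⟩
    · intro hv0
      have h1 : ‖hT.eigenvectorBasis i‖ = 1 := hT.eigenvectorBasis.orthonormal.1 i
      have h2 : ‖hT.eigenvectorBasis i‖ = 0 := by
        rw [EuclideanSpace.norm_eq]
        have : ∀ j, (hT.eigenvectorBasis i) j = 0 := fun j => congrFun hv0 j
        simp [this]
      rw [h2] at h1; norm_num at h1
    · rw [show T *ᵥ evB hT i = hT.eigenvalues i • evB hT i from hT.mulVec_eigenvectorBasis i,
        hlameq]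
  set s := specNorm A with hs
  have hsn : 0 ≤ s := specNorm_nonneg A
  set a := euclEnorm x₁ with ha
  set b := euclEnorm x₂ with hb
  have han : 0 ≤ a := euclEnorm_nonneg x₁
  have hbn : 0 ≤ b := euclEnorm_nonneg x₂
  -- norm splitting
  have hab : a ^ 2 + b ^ 2 = 1 := by
    rw [ha, hb, euclEnorm_sq, euclEnorm_sq]
    have hsum : ∑ z : Fin n ⊕ Fin m, x z ^ 2 = 1 := by
      have h2 := euclEnorm_sq x
      rw [hxnorm] at h2
      simpa using h2.symm
    rw [← hsum, Fintype.sum_sum_type]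
    rfl
  -- inequality 2: |lam| b ≤ s a
  have hineq2 : |lam| * b ≤ s * a := by
    have h1 : euclEnorm (A *ᵥ x₁) ≤ s * a := norm_mulVec_le A x₁
    rw [e2, euclEnorm_smul] at h1
    exact h1
  -- inequality 1: ζ a ≤ s b
  have hineq1 : ζ * a ≤ s * b := by
    have h0 : T *ᵥ x₁ - lam • x₁ = -(Aᵀ *ᵥ x₂) := by
      rw [← e1]; abel
    have h1 : ζ * a ≤ euclEnorm (T *ᵥ x₁ - lam • x₁) := zeta_bound hT hz0 hzle x₁
    rw [h0, euclEnorm_neg] at h1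
    exact h1.trans (norm_transpose_mulVec_le A x₂)
  constructor
  · exact final_calc han hbn hsn hzpos hab hineq1
  · have := final_calc hbn han hsn (abs_pos.mpr hlam) (by linarith) hineq2
    rwa [sq_abs] at this
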